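/- Let n ≥ 4 be even, and let X = {v ∈ ℤⁿ : Σvᵢ even} + ℤ·(½,…,½) ⊂ ℝⁿ (the cocharacter lattice of the half-spin group of type Dₙ). Let L = {0} ⊕ ℚ^{n-1} ⊂ ℝⁿ (the span of the coroots e_i - e_{i+1} for 2 ≤ i ≤ n-1 and e_{n-1}+eₙ). Then L ∩ X = {v ∈ {0} ⊕ ℤ^{n-1} : Σvᵢ even}, i.e. it equals the lattice generated by those coroots; in particular the quotient (L ∩ X)/(ℤ-span of these coroots) is trivial. -/
import Mathlib

/-- Membership in the cocharacter lattice `X = ℤⁿ_even + ℤ·(½,…,½)` of the half-spin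
group of type `Dₙ`, inside `ℚⁿ`. -/
def InHalfSpinLattice (n : ℕ) (v : Fin n → ℚ) : Prop :=
  ∃ (w : Fin n → ℤ) (t : ℤ), Even (∑ i, w i) ∧ v = fun i => (w i : ℚ) + (t : ℚ) / 2

def Gset (n : ℕ) : Set (Fin n → ℚ) :=
  ({x : Fin n → ℚ | ∃ i : Fin n, 1 ≤ i.val ∧ i.val ≤ n - 2 ∧
      x = fun j => if j.val = i.val then 1 else if j.val = i.val + 1 then -1 else 0} ∪
   {x : Fin n → ℚ | x = fun j => if j.val = n - 2 ∨ j.val = n - 1 then 1 else 0})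

/-- `e_j - e_{n-1}` is in the closure, for `1 ≤ j ≤ n-2`. -/
lemma dlem (n : ℕ) (hn : 4 ≤ n) :
    ∀ m : ℕ, ∀ j : Fin n, 1 ≤ j.val → j.val ≤ n - 2 → n - 2 - j.val ≤ m →
    (fun k : Fin n => if k = j then (1:ℚ) else if k.val = n - 1 then -1 else 0) ∈
      AddSubgroup.closure (Gset n) := by
  intro m
  induction m with
  | zero =>
    intro j h1 h2 h3
    have hj : j.val = n - 2 := by omega
    have : (fun k : Fin n => if k = j then (1:ℚ) else if k.val = n - 1 then -1 else 0) =
        fun k : Fin n => if k.val = j.val then (1:ℚ) else if k.val = j.val + 1 then -1 else 0 := by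
      funext k
      simp only [Fin.ext_iff]
      split_ifs <;> (first | rfl | omega)
    rw [this]
    exact AddSubgroup.subset_closure (Or.inl ⟨j, h1, h2, rfl⟩)
  | succ m ih =>
    intro j h1 h2 h3
    by_cases hj : j.val = n - 2
    · have : (fun k : Fin n => if k = j then (1:ℚ) else if k.val = n - 1 then -1 else 0) =
          fun k : Fin n => if k.val = j.val then (1:ℚ) else if k.val = j.val + 1 then -1 else 0 := by
        funext k
        simp only [Fin.ext_iff]
        split_ifs <;> (first | rfl | omega)
      rw [this]
      exact AddSubgroup.subset_closure (Or.inl ⟨j, h1, h2, rfl⟩)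
    · have hjn : j.val + 1 < n := by omega
      have hcl := ih ⟨j.val + 1, hjn⟩ (show 1 ≤ j.val + 1 by omega)
        (show j.val + 1 ≤ n - 2 by omega) (show n - 2 - (j.val + 1) ≤ m by omega)
      have hα : (fun k : Fin n => if k.val = j.val then (1:ℚ) else if k.val = j.val + 1 then -1 else 0)
          ∈ AddSubgroup.closure (Gset n) :=
        AddSubgroup.subset_closure (Or.inl ⟨j, h1, h2, rfl⟩)
      have heq : (fun k : Fin n => if k = j then (1:ℚ) else if k.val = n - 1 then -1 else 0) =
          (fun k : Fin n => if k.val = j.val then (1:ℚ) else if k.val = j.val + 1 then -1 else 0) +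
          (fun k : Fin n => if k = (⟨j.val + 1, hjn⟩ : Fin n) then (1:ℚ) else if k.val = n - 1 then -1 else 0) := by
        funext k
        simp only [Pi.add_apply, Fin.ext_iff]
        split_ifs <;> (first | omega | norm_num)
      rw [heq]
      exact add_mem hα hcl

/-- `2·e_{n-1}` is in the closure. -/
lemma tlem (n : ℕ) (hn : 4 ≤ n) :
    (fun k : Fin n => if k.val = n - 1 then (2:ℚ) else 0) ∈ AddSubgroup.closure (Gset n) := by
  have hβ : (fun j : Fin n => if j.val = n - 2 ∨ j.val = n - 1 then (1:ℚ) else 0) ∈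
      AddSubgroup.closure (Gset n) := AddSubgroup.subset_closure (Or.inr rfl)
  have hi : n - 2 < n := by omega
  have hα : (fun k : Fin n => if k.val = (⟨n-2, hi⟩ : Fin n).val then (1:ℚ)
      else if k.val = (⟨n-2, hi⟩ : Fin n).val + 1 then -1 else 0) ∈ AddSubgroup.closure (Gset n) :=
    AddSubgroup.subset_closure (Or.inl ⟨⟨n-2, hi⟩, show 1 ≤ n - 2 by omega, show n - 2 ≤ n - 2 by omega, rfl⟩)
  have heq : (fun k : Fin n => if k.val = n - 1 then (2:ℚ) else 0) =
      (fun j : Fin n => if j.val = n - 2 ∨ j.val = n - 1 then (1:ℚ) else 0) -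
      (fun k : Fin n => if k.val = (⟨n-2, hi⟩ : Fin n).val then (1:ℚ)
        else if k.val = (⟨n-2, hi⟩ : Fin n).val + 1 then -1 else 0) := by
    funext k
    simp only [Pi.sub_apply, Fin.val_mk]
    split_ifs <;> (first | omega | norm_num)
  rw [heq]
  exact sub_mem hβ hα

def Sgrp (n : ℕ) : AddSubgroup (Fin n → ℚ) where
  carrier := {v | (∀ i : Fin n, i.val = 0 → v i = 0) ∧
    ∃ w : Fin n → ℤ, (∀ i, v i = (w i : ℚ)) ∧ Even (∑ i, w i)}
  zero_mem' := ⟨fun _ _ => rfl, 0, fun _ => by simp, by simp⟩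
  add_mem' := by
    rintro a b ⟨ha0, wa, hwa, hea⟩ ⟨hb0, wb, hwb, heb⟩
    refine ⟨fun i hi => by simp [Pi.add_apply, ha0 i hi, hb0 i hi], wa + wb,
      fun i => by simp [Pi.add_apply, hwa i, hwb i], ?_⟩
    simp only [Pi.add_apply]
    rw [Finset.sum_add_distrib]
    exact hea.add heb
  neg_mem' := by
    rintro a ⟨ha0, wa, hwa, hea⟩
    refine ⟨fun i hi => by simp [Pi.neg_apply, ha0 i hi], -wa,
      fun i => by simp [Pi.neg_apply, hwa i], ?_⟩
    simp only [Pi.neg_apply]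
    rw [Finset.sum_neg_distrib]
    exact hea.neg

lemma sum_pair_int (n : ℕ) (a b : Fin n) (x y : ℤ) :
    (∑ k : Fin n, ((if k = a then x else 0) + (if k = b then y else 0))) = x + y := by
  rw [Finset.sum_add_distrib, Finset.sum_ite_eq' Finset.univ a fun _ => x,
    Finset.sum_ite_eq' Finset.univ b fun _ => y]
  simp

lemma Gsub (n : ℕ) (hn : 4 ≤ n) : Gset n ⊆ (Sgrp n : Set (Fin n → ℚ)) := by
  rintro x (⟨i, h1, h2, rfl⟩ | hx)
  · refine ⟨fun k hk => by simp only; rw [if_neg (by omega), if_neg (by omega)],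
      fun k => if k.val = i.val then 1 else if k.val = i.val + 1 then -1 else 0,
      fun k => by simp only; split_ifs <;> norm_num, ?_⟩
    have hi1 : i.val + 1 < n := by omega
    have : ∀ k : Fin n, (if k.val = i.val then (1:ℤ) else if k.val = i.val + 1 then -1 else 0) =
        (if k = i then (1:ℤ) else 0) + (if k = (⟨i.val + 1, hi1⟩ : Fin n) then -1 else 0) := by
      intro k
      simp only [Fin.ext_iff, Fin.val_mk]
      split_ifs <;> omega
    rw [Finset.sum_congr rfl fun k _ => this k, sum_pair_int]
    simp
  · rw [Set.mem_setOf_eq] at hx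
    subst hx
    refine ⟨fun k hk => by simp only; rw [if_neg (by omega)],
      fun k => if k.val = n - 2 ∨ k.val = n - 1 then 1 else 0,
      fun k => by simp only; split_ifs <;> norm_num, ?_⟩
    have hi1 : n - 2 < n := by omega
    have hi2 : n - 1 < n := by omega
    have : ∀ k : Fin n, (if k.val = n - 2 ∨ k.val = n - 1 then (1:ℤ) else 0) =
        (if k = (⟨n - 2, hi1⟩ : Fin n) then (1:ℤ) else 0) +
        (if k = (⟨n - 1, hi2⟩ : Fin n) then 1 else 0) := by
      intro k
      simp only [Fin.ext_iff, Fin.val_mk]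
      split_ifs <;> omega
    rw [Finset.sum_congr rfl fun k _ => this k, sum_pair_int]
    exact ⟨1, rfl⟩

lemma hard (n : ℕ) (hn : 4 ≤ n) (v : Fin n → ℚ)
    (h0 : ∀ i : Fin n, i.val = 0 → v i = 0) (w : Fin n → ℤ)
    (hw : ∀ i, v i = (w i : ℚ)) (hew : Even (∑ i, w i)) :
    v ∈ AddSubgroup.closure (Gset n) := by
  obtain ⟨mz, hm⟩ := hew
  have h0n : (0:ℕ) < n := by omega
  have hw0 : w ⟨0, h0n⟩ = 0 := by
    have := h0 ⟨0, h0n⟩ rfl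
    rw [hw ⟨0, h0n⟩] at this
    exact_mod_cast this
  set F : Fin n → Fin n → ℚ := fun j k =>
    if j.val = 0 ∨ j.val = n - 1 then 0
    else if k = j then 1 else if k.val = n - 1 then -1 else 0 with hF
  have hFmem : ∀ j : Fin n, F j ∈ AddSubgroup.closure (Gset n) := by
    intro j
    by_cases hP : j.val = 0 ∨ j.val = n - 1
    · have : F j = 0 := by funext k; simp [hF, hP]
      rw [this]; exact zero_mem _
    · have : F j = fun k : Fin n => if k = j then (1:ℚ) else if k.val = n - 1 then -1 else 0 := by
        funext k; simp only [hF]; rw [if_neg hP]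
      rw [this]
      exact dlem n hn n j (by omega) (by omega) (by omega)
  set t : Fin n → ℚ := fun k => if k.val = n - 1 then 2 else 0 with htd
  have htmem : t ∈ AddSubgroup.closure (Gset n) := tlem n hn
  have key : v = (∑ j : Fin n, (w j) • F j) + mz • t := by
    funext k
    simp only [Pi.add_apply, Finset.sum_apply, Pi.smul_apply, zsmul_eq_mul, Pi.mul_apply, Pi.intCast_apply]
    by_cases hk0 : k.val = 0
    · have hz : ∀ j : Fin n, (w j : ℚ) * F j k = 0 := by
        intro j
        simp only [hF, Fin.ext_iff]
        split_ifs <;> (first | omega | norm_num)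
      rw [Finset.sum_eq_zero fun j _ => hz j, h0 k hk0]
      simp only [htd]
      rw [if_neg (by omega)]
      ring
    · by_cases hk1 : k.val = n - 1
      · have hterm : ∀ j : Fin n, (w j : ℚ) * F j k =
            -(w j : ℚ) + ((if j = (⟨0, h0n⟩ : Fin n) then (w j : ℚ) else 0) +
              (if j = k then (w j : ℚ) else 0)) := by
          intro j
          simp only [hF, Fin.ext_iff, Fin.val_mk]
          split_ifs <;> (first | omega | (push_cast; ring))
        rw [Finset.sum_congr rfl fun j _ => hterm j, Finset.sum_add_distrib,
          Finset.sum_add_distrib, Finset.sum_ite_eq' Finset.univ (⟨0, h0n⟩ : Fin n),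
          Finset.sum_ite_eq' Finset.univ k]
        have hsum : (∑ j : Fin n, -(w j : ℚ)) = -((mz : ℚ) + mz) := by
          rw [Finset.sum_neg_distrib]
          congr 1
          exact_mod_cast hm
        rw [hsum]
        simp only [Finset.mem_univ, if_pos, htd]
        rw [if_pos hk1, hw k, hw0]
        push_cast
        ring
      · rw [Finset.sum_eq_single k]
        · have hFkk : F k k = 1 := by
            simp only [hF]
            rw [if_neg (by omega)]
            simp
          rw [hFkk, htd]
          simp only
          rw [if_neg hk1, hw k]
          ring
        · intro j _ hjk
          have hjk' : k.val ≠ j.val := fun h => hjk (Fin.ext h.symm)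
          simp only [hF, Fin.ext_iff]
          split_ifs <;> (first | omega | norm_num)
        · intro h; exact absurd (Finset.mem_univ k) h
  rw [key]
  exact add_mem
    (AddSubgroup.sum_mem _ fun j _ => AddSubgroup.zsmul_mem _ (hFmem j) _)
    (AddSubgroup.zsmul_mem _ htmem _)

lemma part1 (n : ℕ) (hn : 4 ≤ n) (heven : Even n) (v : Fin n → ℚ) :
    ((∀ i : Fin n, i.val = 0 → v i = 0) ∧ InHalfSpinLattice n v) ↔
    ((∀ i : Fin n, i.val = 0 → v i = 0) ∧
      ∃ w : Fin n → ℤ, (∀ i, v i = (w i : ℚ)) ∧ Even (∑ i, w i)) := by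
  constructor
  · rintro ⟨h0, w, t, hew, hv⟩
    refine ⟨h0, fun i => w i - w ⟨0, by omega⟩, fun i => ?_, ?_⟩
    · have h00 := h0 ⟨0, by omega⟩ rfl
      rw [hv] at h00 ⊢
      have ht : (t : ℚ) / 2 = -(w ⟨0, by omega⟩ : ℚ) := by linarith
      push_cast
      rw [ht]; ring
    · have : (∑ i, (w i - w ⟨0, by omega⟩)) = (∑ i, w i) - n * w ⟨0, by omega⟩ := by
        rw [Finset.sum_sub_distrib, Finset.sum_const, Finset.card_univ, Fintype.card_fin,
          nsmul_eq_mul]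
      rw [this]
      exact hew.sub (((Int.even_coe_nat n).mpr heven).mul_right _)
  · rintro ⟨h0, w, hw, hew⟩
    refine ⟨h0, w, 0, hew, ?_⟩
    funext i
    rw [hw i]; push_cast; ring

/-- for `n ≥ 4` even, the intersection of `L = 0 ⊕ ℚ^{n-1}` (the span of
the coroots `eᵢ - eᵢ₊₁` for `2 ≤ i ≤ n-1` and `e_{n-1} + eₙ`) with
`X = ℤⁿ_even + ℤ·(½,…,½)` equals `{v ∈ 0 ⊕ ℤ^{n-1} : Σ vᵢ even}`, i.e. it equals the
`ℤ`-span of those coroots (so the quotient by the coroot lattice is trivial). -/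
theorem stmt10 (n : ℕ) (hn : 4 ≤ n) (heven : Even n) :
    (∀ v : Fin n → ℚ,
      ((∀ i : Fin n, i.val = 0 → v i = 0) ∧ InHalfSpinLattice n v) ↔
      ((∀ i : Fin n, i.val = 0 → v i = 0) ∧ ∃ w : Fin n → ℤ, (∀ i, v i = (w i : ℚ)) ∧ Even (∑ i, w i))) ∧
    (∀ v : Fin n → ℚ,
      ((∀ i : Fin n, i.val = 0 → v i = 0) ∧ InHalfSpinLattice n v) ↔
      v ∈ AddSubgroup.closure
        ({x : Fin n → ℚ | ∃ i : Fin n, 1 ≤ i.val ∧ i.val ≤ n - 2 ∧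
            x = fun j => if j.val = i.val then 1 else if j.val = i.val + 1 then -1 else 0} ∪
         {x : Fin n → ℚ | x = fun j => if j.val = n - 2 ∨ j.val = n - 1 then 1 else 0})) := by
  refine ⟨fun v => part1 n hn heven v, fun v => ?_⟩
  constructor
  · intro hv
    obtain ⟨h0, w, hw, hew⟩ := (part1 n hn heven v).mp hv
    exact hard n hn v h0 w hw hew
  · intro hv
    have hv' : v ∈ AddSubgroup.closure (Gset n) := hv
    have hS : v ∈ Sgrp n := (AddSubgroup.closure_le _).mpr (Gsub n hn) hv'
    obtain ⟨h0, w, hw, hew⟩ := hS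
    exact (part1 n hn heven v).mpr ⟨h0, w, hw, hew⟩
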